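/- For each necklace word w, the assignment θ_w(a) = −∂w/∂a* and θ_w(a*) = ∂w/∂a extends to a symplectic V-derivation of C𝔔, i.e., L_{θ_w}(ω) = 0 in dR^2_V C𝔔 where ω = Σ_{a ∈ Q_a} da* da; moreover i_{θ_w}(ω) = dw. -/

import Mathlib

namespace Necklace

variable {k : ℕ} {A : Type}

/-- `isPath s t v l w` : the list of arrows `l` forms an oriented path from vertex `v`
to vertex `w` in the quiver with arrow set `A` and source/target maps `s`, `t`. -/
def isPath (s t : A → Fin k) : Fin k → List A → Fin k → Bool
  | v, [], w => v = w
  | v, a :: l, w => s a = v && isPath s t (t a) l w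

/-- An oriented path in the quiver. -/
structure PathIn (s t : A → Fin k) where
  src : Fin k
  tgt : Fin k
  arrows : List A
  is_path : isPath s t src arrows tgt = true

variable {s t : A → Fin k}

theorem isPath_append : ∀ {l l' : List A} {v w u : Fin k},
    isPath s t v l w = true → isPath s t w l' u = true →
      isPath s t v (l ++ l') u = true := by
  intro l
  induction l with
  | nil =>
    intro l' v w u h h'
    simp [isPath] at h
    subst h
    simpa using h'
  | cons a l ih =>
    intro l' v w u h h'
    simp only [isPath, List.cons_append, Bool.and_eq_true, decide_eq_true_eq] at h ⊢
    exact ⟨h.1, ih h.2 h'⟩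

/-- Concatenation of composable paths (first travel `p`, then `q`). -/
def PathIn.comp (p q : PathIn s t) (h : p.tgt = q.src) : PathIn s t :=
  ⟨p.src, q.tgt, p.arrows ++ q.arrows,
    isPath_append p.is_path (by rw [h]; exact q.is_path)⟩

/-- The length-zero path at a vertex (vertex idempotent). -/
def idPath (s t : A → Fin k) (v : Fin k) : PathIn s t :=
  ⟨v, v, [], by simp [isPath]⟩

/-- A model of the path algebra `ℂQ` : a `ℂ`-algebra `R` with a basis indexed by the
oriented paths of the quiver, multiplying by concatenation (zero if not composable),
whose unit is the sum of the vertex idempotents. -/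
structure Model (s t : A → Fin k) (R : Type) [Ring R] [Algebra ℂ R] where
  B : Module.Basis (PathIn s t) ℂ R
  mul_of_comp : ∀ p q : PathIn s t, ∀ h : p.tgt = q.src, B q * B p = B (p.comp q h)
  mul_of_ncomp : ∀ p q : PathIn s t, p.tgt ≠ q.src → B q * B p = 0
  one_eq : (1 : R) = ∑ v : Fin k, B (idPath s t v)

/-- The commutator subspace `[R,R]`, i.e. the `ℂ`-linear span of all commutators. -/
def commSub (R : Type) [Ring R] [Algebra ℂ R] : Submodule ℂ R :=
  Submodule.span ℂ {z : R | ∃ x y : R, z = x * y - y * x}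

/-- The length-one path given by a single arrow. -/
def arrPath (s t : A → Fin k) (a : A) : PathIn s t :=
  ⟨s a, t a, [a], by simp [isPath]⟩

variable {R : Type} [Ring R] [Algebra ℂ R]

/-- The partial derivative `∂p/∂b` of an oriented cycle `p` with respect to the arrow
`b`: the sum, over all occurrences of `b` in `p`, of the path obtained by deleting that
occurrence and reading the cycle starting there (zero on non-cycles). -/
noncomputable def derivPath [DecidableEq A] (M : Model s t R) (b : A) (p : PathIn s t) :
    R :=
  ∑ i ∈ Finset.range p.arrows.length,
    if h : p.src = p.tgt ∧ p.arrows[i]? = some b ∧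
        isPath s t (t b) (p.arrows.drop (i + 1) ++ p.arrows.take i) (s b) = true
    then M.B ⟨t b, s b, p.arrows.drop (i + 1) ++ p.arrows.take i, h.2.2⟩ else 0

/-- The partial differential operator `∂/∂b` on necklace words, as a linear map
`ℂQ → ℂQ` (defined on the basis of paths, zero on non-cycles). -/
noncomputable def D [DecidableEq A] (M : Model s t R) (b : A) : R →ₗ[ℂ] R :=
  M.B.constr ℂ (derivPath M b)

section Double

variable {A₀ : Type} (s₀ t₀ : A₀ → Fin k)

/-- Source map of the double quiver `𝔔` (arrows `a` and reversed arrows `a*`). -/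
def ds : A₀ ⊕ A₀ → Fin k := Sum.elim s₀ t₀

/-- Target map of the double quiver `𝔔`. -/
def dt : A₀ ⊕ A₀ → Fin k := Sum.elim t₀ s₀

variable [DecidableEq A₀] [Fintype A₀]

/-- The Kontsevich (necklace) bracket on `ℂ𝔔`, before passing to the commutator
quotient: `{x,y} = Σ_{a ∈ Q_a} (∂x/∂a ∂y/∂a* − ∂x/∂a* ∂y/∂a)`. -/
noncomputable def br (M : Model (ds s₀ t₀) (dt s₀ t₀) R) (x y : R) : R :=
  ∑ a : A₀,
    (D M (Sum.inl a) x * D M (Sum.inr a) y - D M (Sum.inr a) x * D M (Sum.inl a) y)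

/-- `θ` is a `V`-derivation of `ℂ𝔔`. -/
def IsVDer (M : Model (ds s₀ t₀) (dt s₀ t₀) R) (θ : R →ₗ[ℂ] R) : Prop :=
  (∀ x y : R, θ (x * y) = θ x * y + x * θ y) ∧
    ∀ v : Fin k, θ (M.B (idPath (ds s₀ t₀) (dt s₀ t₀) v)) = 0

/-- `θ` is the derivation `θ_x` attached to `x ∈ ℂ𝔔`, i.e. the `V`-derivation with
`θ(a) = −∂x/∂a*` and `θ(a*) = ∂x/∂a` for every arrow `a` of `Q`. -/
def IsThetaOf (M : Model (ds s₀ t₀) (dt s₀ t₀) R) (x : R) (θ : R →ₗ[ℂ] R) : Prop :=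
  IsVDer s₀ t₀ M θ ∧
    ∀ a : A₀,
      θ (M.B (arrPath (ds s₀ t₀) (dt s₀ t₀) (Sum.inl a))) = - D M (Sum.inr a) x ∧
      θ (M.B (arrPath (ds s₀ t₀) (dt s₀ t₀) (Sum.inr a))) = D M (Sum.inl a) x

end Double

/-- A model of the relative differential forms `Ω•_V ℂ𝔔`: a graded `ℂ`-algebra `W` with
a degree `+1` differential `d` squaring to zero, generated by `ι(ℂ𝔔)` and `d ι(ℂ𝔔)`. -/
structure Forms {k : ℕ} {A : Type} {s t : A → Fin k} (R : Type) [Ring R] [Algebra ℂ R]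
    (M : Model s t R) (W : Type) [Ring W] [Algebra ℂ W] where
  gr : ℕ → Submodule ℂ W
  mul_mem : ∀ (m n : ℕ) (x y : W), x ∈ gr m → y ∈ gr n → x * y ∈ gr (m + n)
  ι : R →ₐ[ℂ] W
  ι_mem : ∀ x : R, ι x ∈ gr 0
  d : W →ₗ[ℂ] W
  d_mem : ∀ (n : ℕ) (x : W), x ∈ gr n → d x ∈ gr (n + 1)
  d_leibniz : ∀ (m : ℕ) (x : W), x ∈ gr m → ∀ y : W,
    d (x * y) = d x * y + ((-1 : ℂ) ^ m) • (x * d y)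
  d_d : ∀ x : W, d (d x) = 0
  d_vertex : ∀ v : Fin k, d (ι (M.B (idPath s t v))) = 0
  gen : Algebra.adjoin ℂ (Set.range ι ∪ Set.range fun x => d (ι x)) = ⊤

/-- The span of all super-commutators `Σᵢ [Ωⁱ, Ω^{n-i}]`; the Karoubi complex `dR•` is
the quotient of `Ω•` by this subspace. -/
def karoubi {k : ℕ} {A : Type} {s t : A → Fin k} {R : Type} [Ring R] [Algebra ℂ R]
    {M : Model s t R} {W : Type} [Ring W] [Algebra ℂ W] (F : Forms R M W) :
    Submodule ℂ W :=
  Submodule.span ℂ {z : W | ∃ (m n : ℕ) (x y : W), x ∈ F.gr m ∧ y ∈ F.gr n ∧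
    z = x * y - ((-1 : ℂ) ^ (m * n)) • (y * x)}

/-- `L` is the Lie derivative `L_θ` on `Ω•` attached to the derivation `θ` of `ℂ𝔔`. -/
def IsLOf {k : ℕ} {A : Type} {s t : A → Fin k} {R : Type} [Ring R] [Algebra ℂ R]
    {M : Model s t R} {W : Type} [Ring W] [Algebra ℂ W] (F : Forms R M W)
    (θ : R →ₗ[ℂ] R) (L : W →ₗ[ℂ] W) : Prop :=
  (∀ x y : W, L (x * y) = L x * y + x * L y) ∧
  (∀ x : R, L (F.ι x) = F.ι (θ x)) ∧
  (∀ x : R, L (F.d (F.ι x)) = F.d (F.ι (θ x)))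

/-- `i` is the contraction `i_θ` on `Ω•` attached to the derivation `θ` of `ℂ𝔔`. -/
def IsIOf {k : ℕ} {A : Type} {s t : A → Fin k} {R : Type} [Ring R] [Algebra ℂ R]
    {M : Model s t R} {W : Type} [Ring W] [Algebra ℂ W] (F : Forms R M W)
    (θ : R →ₗ[ℂ] R) (i : W →ₗ[ℂ] W) : Prop :=
  (∀ (m : ℕ) (x : W), x ∈ F.gr m → ∀ y : W,
    i (x * y) = i x * y + ((-1 : ℂ) ^ m) • (x * i y)) ∧
  (∀ x : R, i (F.ι x) = 0) ∧
  (∀ x : R, i (F.d (F.ι x)) = F.ι (θ x))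

section Omega

variable {A₀ : Type} (s₀ t₀ : A₀ → Fin k) [DecidableEq A₀] [Fintype A₀]
variable {R : Type} [Ring R] [Algebra ℂ R] {W : Type} [Ring W] [Algebra ℂ W]

/-- The canonical symplectic form `ω = Σ_{a ∈ Q_a} da* da ∈ Ω²_V ℂ𝔔`. -/
noncomputable def omega (M : Model (ds s₀ t₀) (dt s₀ t₀) R) (F : Forms R M W) : W :=
  ∑ a : A₀,
    F.d (F.ι (M.B (arrPath (ds s₀ t₀) (dt s₀ t₀) (Sum.inr a)))) *
      F.d (F.ι (M.B (arrPath (ds s₀ t₀) (dt s₀ t₀) (Sum.inl a))))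

end Omega

/-! ### Auxiliary infrastructure -/

section Aux1

variable {k : ℕ} {A : Type} {s t : A → Fin k}

theorem PathIn.ext' {p q : PathIn s t} (h1 : p.src = q.src) (h2 : p.tgt = q.tgt)
    (h3 : p.arrows = q.arrows) : p = q := by
  cases p; cases q; simp_all

theorem isPath_split {l : List A} {v w : Fin k} (h : isPath s t v l w = true) :
    ∀ i, (hi : i < l.length) →
      isPath s t v (l.take i) (s l[i]) = true ∧
      isPath s t (t l[i]) (l.drop (i+1)) w = true := by
  induction l generalizing v with
  | nil => intro i hi; simp at hi
  | cons a l ih =>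
    intro i hi
    simp only [isPath, Bool.and_eq_true, decide_eq_true_eq] at h
    cases i with
    | zero =>
      refine ⟨?_, ?_⟩ <;> simp [isPath, h.1, h.2]
    | succ i =>
      have := ih h.2 i (by simpa using hi)
      constructor
      · simp only [List.take_succ_cons, isPath, Bool.and_eq_true, decide_eq_true_eq,
          List.getElem_cons_succ]
        exact ⟨h.1, this.1⟩
      · simpa using this.2

/-- The initial segment of a path, up to (excluding) the `i`-th arrow. -/
def takePath (q : PathIn s t) (i : ℕ) (hi : i < q.arrows.length) : PathIn s t :=
  ⟨q.src, s q.arrows[i], q.arrows.take i, (isPath_split q.is_path i hi).1⟩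

/-- The final segment of a path, after the `i`-th arrow. -/
def dropPath (q : PathIn s t) (i : ℕ) (hi : i < q.arrows.length) : PathIn s t :=
  ⟨t q.arrows[i], q.tgt, q.arrows.drop (i+1), (isPath_split q.is_path i hi).2⟩

variable {R : Type} [Ring R] [Algebra ℂ R]

theorem B_mul_id (M : Model s t R) (q : PathIn s t) :
    M.B q * M.B (idPath s t q.src) = M.B q := by
  rw [M.mul_of_comp (idPath s t q.src) q rfl]
  exact congrArg M.B (PathIn.ext' rfl rfl (by simp [idPath, PathIn.comp]))

theorem id_mul_B (M : Model s t R) (q : PathIn s t) :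
    M.B (idPath s t q.tgt) * M.B q = M.B q := by
  rw [M.mul_of_comp q (idPath s t q.tgt) rfl]
  exact congrArg M.B (PathIn.ext' rfl rfl (by simp [idPath, PathIn.comp]))

/-- Candidate for a `V`-derivation determined by values `f` on the arrows:
its value on a basis path. -/
noncomputable def thetaPath (M : Model s t R) (f : A → R) (q : PathIn s t) : R :=
  ∑ i ∈ Finset.range q.arrows.length,
    if hi : i < q.arrows.length then
      M.B (dropPath q i hi) * f q.arrows[i] * M.B (takePath q i hi)
    else 0

/-- The `V`-derivation determined by values `f` on the arrows. -/
noncomputable def theta (M : Model s t R) (f : A → R) : R →ₗ[ℂ] R :=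
  M.B.constr ℂ (thetaPath M f)

end Aux1

section Aux2

variable {k : ℕ} {A : Type} {s t : A → Fin k}
variable {R : Type} [Ring R] [Algebra ℂ R]

theorem thetaPath_comp (M : Model s t R) (f : A → R) (q r : PathIn s t)
    (h : q.tgt = r.src) :
    thetaPath M f (q.comp r h) = thetaPath M f r * M.B q + M.B r * thetaPath M f q := by
  have hlen : (q.comp r h).arrows.length = q.arrows.length + r.arrows.length := by
    simp [PathIn.comp]
  unfold thetaPath
  have hrange : Finset.range (q.comp r h).arrows.length
      = Finset.range (q.arrows.length + r.arrows.length) := by rw [hlen]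
  have harr : (q.comp r h).arrows = q.arrows ++ r.arrows := rfl
  have hB1 : ∑ i ∈ Finset.range q.arrows.length,
      (if hi : i < (q.comp r h).arrows.length then
        M.B (dropPath (q.comp r h) i hi) * f ((q.comp r h).arrows[i]'hi)
          * M.B (takePath (q.comp r h) i hi) else 0)
      = M.B r * ∑ i ∈ Finset.range q.arrows.length,
        (if hi : i < q.arrows.length then
          M.B (dropPath q i hi) * f (q.arrows[i]'hi) * M.B (takePath q i hi) else 0) := by
    rw [Finset.mul_sum]
    refine Finset.sum_congr rfl fun i hi => ?_
    have hiq : i < q.arrows.length := Finset.mem_range.1 hi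
    have hic : i < (q.comp r h).arrows.length := by omega
    rw [dif_pos hic, dif_pos hiq]
    have hget : (q.comp r h).arrows[i]'hic = q.arrows[i]'hiq := by
      simp only [harr]; exact List.getElem_append_left hiq
    have htake : takePath (q.comp r h) i hic = takePath q i hiq := by
      refine PathIn.ext' rfl (by simp [takePath, PathIn.comp, List.getElem_append_left hiq]) ?_
      show ((q.comp r h).arrows).take i = q.arrows.take i
      rw [harr]; exact List.take_append_of_le_length (le_of_lt hiq)
    have hdrop : M.B (dropPath (q.comp r h) i hic)
        = M.B r * M.B (dropPath q i hiq) := by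
      have h' : (dropPath q i hiq).tgt = r.src := h
      rw [M.mul_of_comp (dropPath q i hiq) r h']
      refine congrArg M.B (PathIn.ext'
        (by simp [dropPath, PathIn.comp, List.getElem_append_left hiq]) rfl ?_)
      show ((q.comp r h).arrows).drop (i+1) = q.arrows.drop (i+1) ++ r.arrows
      rw [harr]; exact List.drop_append_of_le_length hiq
    rw [htake, hdrop, hget, mul_assoc (M.B r), mul_assoc (M.B r)]
  have hB2 : ∑ j ∈ Finset.range r.arrows.length,
      (if hi : q.arrows.length + j < (q.comp r h).arrows.length then
        M.B (dropPath (q.comp r h) (q.arrows.length + j) hi)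
          * f ((q.comp r h).arrows[q.arrows.length + j]'hi)
          * M.B (takePath (q.comp r h) (q.arrows.length + j) hi) else 0)
      = (∑ j ∈ Finset.range r.arrows.length,
        (if hj : j < r.arrows.length then
          M.B (dropPath r j hj) * f (r.arrows[j]'hj) * M.B (takePath r j hj) else 0))
        * M.B q := by
    rw [Finset.sum_mul]
    refine Finset.sum_congr rfl fun j hj => ?_
    have hjr : j < r.arrows.length := Finset.mem_range.1 hj
    have hic : q.arrows.length + j < (q.comp r h).arrows.length := by omega
    rw [dif_pos hic, dif_pos hjr]
    have hget : (q.comp r h).arrows[q.arrows.length + j]'hic = r.arrows[j]'hjr := by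
      simp only [harr]
      rw [List.getElem_append_right (by omega)]
      congr 1; omega
    have htake : M.B (takePath (q.comp r h) (q.arrows.length + j) hic)
        = M.B (takePath r j hjr) * M.B q := by
      have h' : q.tgt = (takePath r j hjr).src := h
      rw [M.mul_of_comp q (takePath r j hjr) h']
      refine congrArg M.B (PathIn.ext' rfl ?_ ?_)
      · show s ((q.comp r h).arrows[q.arrows.length + j]'hic) = s (r.arrows[j]'hjr)
        rw [hget]
      show ((q.comp r h).arrows).take (q.arrows.length + j)
        = q.arrows ++ r.arrows.take j
      rw [harr]; exact List.take_length_add_append j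
    have hdrop : dropPath (q.comp r h) (q.arrows.length + j) hic = dropPath r j hjr := by
      refine PathIn.ext' ?_ rfl ?_
      · show t ((q.comp r h).arrows[q.arrows.length + j]'hic) = t (r.arrows[j]'hjr)
        rw [hget]
      show ((q.comp r h).arrows).drop (q.arrows.length + j + 1) = r.arrows.drop (j+1)
      rw [harr, add_assoc]; exact List.drop_length_add_append (j+1)
    rw [htake, hdrop, hget, ← mul_assoc]
  rw [hrange, Finset.sum_range_add, hB1, hB2, add_comm]

theorem thetaPath_mul_ncomp (M : Model s t R) (f : A → R) (q r : PathIn s t)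
    (h : q.tgt ≠ r.src) : thetaPath M f r * M.B q = 0 := by
  unfold thetaPath
  rw [Finset.sum_mul]
  refine Finset.sum_eq_zero fun i hi => ?_
  have hir : i < r.arrows.length := Finset.mem_range.1 hi
  rw [dif_pos hir, mul_assoc, mul_assoc,
    M.mul_of_ncomp q (takePath r i hir) h, mul_zero, mul_zero]

theorem mul_thetaPath_ncomp (M : Model s t R) (f : A → R) (q r : PathIn s t)
    (h : q.tgt ≠ r.src) : M.B r * thetaPath M f q = 0 := by
  unfold thetaPath
  rw [Finset.mul_sum]
  refine Finset.sum_eq_zero fun i hi => ?_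
  have hiq : i < q.arrows.length := Finset.mem_range.1 hi
  rw [dif_pos hiq, ← mul_assoc, ← mul_assoc,
    M.mul_of_ncomp (dropPath q i hiq) r h, zero_mul, zero_mul]

theorem theta_leibniz (M : Model s t R) (f : A → R) (x y : R) :
    theta M f (x * y) = theta M f x * y + x * theta M f y := by
  have key : (LinearMap.mul ℂ R).compr₂ (theta M f)
      = (LinearMap.mul ℂ R).comp (theta M f) + (LinearMap.mul ℂ R).compl₂ (theta M f) := by
    refine M.B.ext fun r => ?_
    refine M.B.ext fun q => ?_
    simp only [LinearMap.compr₂_apply, LinearMap.mul_apply', LinearMap.comp_apply,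
      LinearMap.add_apply, LinearMap.compl₂_apply, theta, Module.Basis.constr_basis]
    by_cases hc : q.tgt = r.src
    · rw [M.mul_of_comp q r hc, Module.Basis.constr_basis, thetaPath_comp M f q r hc]
    · rw [M.mul_of_ncomp q r hc, map_zero,
        thetaPath_mul_ncomp M f q r hc, mul_thetaPath_ncomp M f q r hc, add_zero]
  have := congrArg (fun g => g x y) key
  simpa using this

theorem theta_idPath (M : Model s t R) (f : A → R) (v : Fin k) :
    theta M f (M.B (idPath s t v)) = 0 := by
  rw [theta, Module.Basis.constr_basis]
  simp [thetaPath, idPath]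

theorem theta_arr (M : Model s t R) (f : A → R)
    (hf : ∀ b : A, M.B (idPath s t (t b)) * f b * M.B (idPath s t (s b)) = f b)
    (b : A) : theta M f (M.B (arrPath s t b)) = f b := by
  rw [theta, Module.Basis.constr_basis]
  unfold thetaPath
  have h0 : (0:ℕ) < (arrPath s t b).arrows.length := Nat.zero_lt_one
  have hrange : Finset.range (arrPath s t b).arrows.length = Finset.range 1 := rfl
  rw [hrange, Finset.sum_range_one, dif_pos h0]
  have hd : dropPath (arrPath s t b) 0 h0 = idPath s t (t b) :=
    PathIn.ext' rfl rfl rfl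
  have ht : takePath (arrPath s t b) 0 h0 = idPath s t (s b) :=
    PathIn.ext' rfl rfl rfl
  rw [hd, ht]
  exact hf b

end Aux2

section Aux3

variable {k : ℕ} {A : Type} {s t : A → Fin k}
variable {R : Type} [Ring R] [Algebra ℂ R]

theorem D_sandwich [DecidableEq A] (M : Model s t R) (b : A) (x : R) :
    M.B (idPath s t (s b)) * D M b x * M.B (idPath s t (t b)) = D M b x := by
  have key : ((LinearMap.mulRight ℂ (M.B (idPath s t (t b)))).comp
      ((LinearMap.mulLeft ℂ (M.B (idPath s t (s b)))).comp (D M b))) = D M b := by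
    refine M.B.ext fun q => ?_
    simp only [LinearMap.comp_apply, LinearMap.mulLeft_apply, LinearMap.mulRight_apply,
      D, Module.Basis.constr_basis]
    unfold derivPath
    rw [Finset.mul_sum, Finset.sum_mul]
    refine Finset.sum_congr rfl fun i hi => ?_
    split_ifs with hc
    · rw [id_mul_B M ⟨t b, s b, q.arrows.drop (i+1) ++ q.arrows.take i, hc.2.2⟩,
        B_mul_id M ⟨t b, s b, q.arrows.drop (i+1) ++ q.arrows.take i, hc.2.2⟩]
    · rw [mul_zero, zero_mul]
  have := DFunLike.congr_fun key x
  simpa using this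

variable {A₀ : Type} (s₀ t₀ : A₀ → Fin k) [DecidableEq A₀] [Fintype A₀]

/-- The values of the Hamiltonian derivation `θ_x` on the arrows of the double quiver. -/
noncomputable def theta0 (M : Model (ds s₀ t₀) (dt s₀ t₀) R) (x : R) : A₀ ⊕ A₀ → R
  | Sum.inl a => - D M (Sum.inr a) x
  | Sum.inr a => D M (Sum.inl a) x

theorem theta0_sandwich (M : Model (ds s₀ t₀) (dt s₀ t₀) R) (x : R) (b : A₀ ⊕ A₀) :
    M.B (idPath (ds s₀ t₀) (dt s₀ t₀) (dt s₀ t₀ b)) * theta0 s₀ t₀ M x b *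
      M.B (idPath (ds s₀ t₀) (dt s₀ t₀) (ds s₀ t₀ b)) = theta0 s₀ t₀ M x b := by
  cases b with
  | inl a =>
    show _ * (- D M (Sum.inr a) x) * _ = - D M (Sum.inr a) x
    rw [mul_neg, neg_mul, neg_inj]
    exact D_sandwich M (Sum.inr a) x
  | inr a =>
    exact D_sandwich M (Sum.inl a) x

theorem isThetaOf_theta (M : Model (ds s₀ t₀) (dt s₀ t₀) R) (x : R) :
    IsThetaOf s₀ t₀ M x (theta M (theta0 s₀ t₀ M x)) := by
  refine ⟨⟨theta_leibniz M _, theta_idPath M _⟩, fun a => ⟨?_, ?_⟩⟩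
  · exact theta_arr M _ (theta0_sandwich s₀ t₀ M x) (Sum.inl a)
  · exact theta_arr M _ (theta0_sandwich s₀ t₀ M x) (Sum.inr a)

end Aux3

section Aux4

variable {k : ℕ} {A : Type} {s t : A → Fin k}
variable {R : Type} [Ring R] [Algebra ℂ R] {M : Model s t R}
variable {W : Type} [Ring W] [Algebra ℂ W]

theorem mem_karoubi_mul {F : Forms R M W} {m n : ℕ} {x y : W}
    (hx : x ∈ F.gr m) (hy : y ∈ F.gr n) :
    x * y - ((-1 : ℂ) ^ (m * n)) • (y * x) ∈ karoubi F :=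
  Submodule.subset_span ⟨m, n, x, y, hx, hy, rfl⟩

theorem kc10 {F : Forms R M W} {x y : W} (hx : x ∈ F.gr 1) (hy : y ∈ F.gr 0) :
    x * y - y * x ∈ karoubi F := by
  have := mem_karoubi_mul (F := F) hx hy
  simpa using this

theorem kc20 {F : Forms R M W} {x y : W} (hx : x ∈ F.gr 2) (hy : y ∈ F.gr 0) :
    x * y - y * x ∈ karoubi F := by
  have := mem_karoubi_mul (F := F) hx hy
  simpa using this

theorem kc11 {F : Forms R M W} {x y : W} (hx : x ∈ F.gr 1) (hy : y ∈ F.gr 1) :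
    x * y + y * x ∈ karoubi F := by
  have := mem_karoubi_mul (F := F) hx hy
  simpa [sub_neg_eq_add] using this

/-- The span of commutators of a `1`-form with a `0`-form. -/
def K' (F : Forms R M W) : Submodule ℂ W :=
  Submodule.span ℂ {z : W | ∃ x y : W, x ∈ F.gr 1 ∧ y ∈ F.gr 0 ∧ z = x * y - y * x}

theorem K'_le (F : Forms R M W) : K' F ≤ karoubi F := by
  refine Submodule.span_le.2 ?_
  rintro z ⟨x, y, hx, hy, rfl⟩
  exact kc10 hx hy

theorem d_mul_of_mem0 (F : Forms R M W) {u : W} (hu : u ∈ F.gr 0) (v : W) :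
    F.d (u * v) = F.d u * v + u * F.d v := by
  rw [F.d_leibniz 0 u hu v]; simp

theorem d_K'_mem_karoubi (F : Forms R M W) {z : W} (hz : z ∈ K' F) :
    F.d z ∈ karoubi F := by
  induction hz using Submodule.span_induction with
  | mem z hzmem =>
    obtain ⟨x, y, hx, hy, rfl⟩ := hzmem
    have e : F.d (x * y - y * x)
        = (F.d x * y - y * F.d x) - (x * F.d y + F.d y * x) := by
      rw [map_sub, F.d_leibniz 1 x hx y, d_mul_of_mem0 F hy x]
      simp only [pow_one, neg_smul, one_smul]
      abel
    rw [e]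
    exact sub_mem (kc20 (F.d_mem 1 x hx) hy) (kc11 hx (F.d_mem 0 y hy))
  | zero => simpa using (karoubi F).zero_mem
  | add x y hx hy ihx ihy => rw [map_add]; exact add_mem ihx ihy
  | smul a x hx ih => rw [map_smul]; exact Submodule.smul_mem _ a ih

theorem del_mul_id (F : Forms R M W) (b : A) :
    F.d (F.ι (M.B (arrPath s t b))) * F.ι (M.B (idPath s t (s b)))
      = F.d (F.ι (M.B (arrPath s t b))) := by
  have h1 : F.ι (M.B (arrPath s t b))
      = F.ι (M.B (arrPath s t b)) * F.ι (M.B (idPath s t (s b))) := by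
    rw [← map_mul]
    exact congrArg F.ι (B_mul_id M (arrPath s t b)).symm
  calc F.d (F.ι (M.B (arrPath s t b))) * F.ι (M.B (idPath s t (s b)))
      = F.d (F.ι (M.B (arrPath s t b)) * F.ι (M.B (idPath s t (s b)))) := by
        rw [d_mul_of_mem0 F (F.ι_mem _), F.d_vertex, mul_zero, add_zero]
    _ = _ := by rw [← h1]

/-- The `i`-th term in the Leibniz expansion of `d ι(B q)`. -/
noncomputable def seg (F : Forms R M W) (q : PathIn s t) (i : ℕ) : W :=
  if hi : i < q.arrows.length then
    F.ι (M.B (dropPath q i hi)) * F.d (F.ι (M.B (arrPath s t (q.arrows[i]'hi))))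
      * F.ι (M.B (takePath q i hi))
  else 0

theorem d_iota_B_aux (F : Forms R M W) :
    ∀ (l : List A) (v w : Fin k) (h : isPath s t v l w = true),
    F.d (F.ι (M.B ⟨v, w, l, h⟩)) = ∑ i ∈ Finset.range l.length, seg F ⟨v, w, l, h⟩ i := by
  intro l
  induction l with
  | nil =>
    intro v w h
    have hv : v = w := by simpa [isPath] using h
    subst hv
    have e : (⟨v, v, [], h⟩ : PathIn s t) = idPath s t v := PathIn.ext' rfl rfl rfl
    rw [e, F.d_vertex]
    simp
  | cons b l ih =>
    intro v w h
    have hbv : s b = v ∧ isPath s t (t b) l w = true := by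
      simpa [isPath] using h
    have hq : M.B (⟨v, w, b :: l, h⟩ : PathIn s t)
        = M.B ⟨t b, w, l, hbv.2⟩ * M.B (arrPath s t b) := by
      rw [M.mul_of_comp (arrPath s t b) ⟨t b, w, l, hbv.2⟩ rfl]
      exact congrArg M.B
        (PathIn.ext' (p := (arrPath s t b).comp ⟨t b, w, l, hbv.2⟩ rfl)
          (q := ⟨v, w, b :: l, h⟩) hbv.1 rfl rfl).symm
    rw [hq, map_mul, d_mul_of_mem0 F (F.ι_mem _), ih (t b) w hbv.2]
    have hrange : Finset.range ((b :: l).length) = Finset.range (l.length + 1) := rfl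
    rw [hrange, Finset.sum_range_succ']
    congr 1
    · rw [Finset.sum_mul]
      refine Finset.sum_congr rfl fun i hi => ?_
      have hil : i < l.length := Finset.mem_range.1 hi
      have hic : i + 1 < (⟨v, w, b :: l, h⟩ : PathIn s t).arrows.length := by
        simpa using Nat.succ_lt_succ hil
      rw [seg, dif_pos hil, seg, dif_pos hic]
      have hget : ((⟨v, w, b :: l, h⟩ : PathIn s t).arrows[i+1]'hic)
          = (l[i]'hil) := rfl
      have hdrop : dropPath (⟨v, w, b :: l, h⟩ : PathIn s t) (i+1) hic
          = dropPath ⟨t b, w, l, hbv.2⟩ i hil :=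
        PathIn.ext' rfl rfl rfl
      have htake : M.B (takePath (⟨v, w, b :: l, h⟩ : PathIn s t) (i+1) hic)
          = M.B (takePath ⟨t b, w, l, hbv.2⟩ i hil) * M.B (arrPath s t b) := by
        rw [M.mul_of_comp (arrPath s t b) (takePath ⟨t b, w, l, hbv.2⟩ i hil) rfl]
        exact congrArg M.B
          (PathIn.ext' (p := (arrPath s t b).comp (takePath ⟨t b, w, l, hbv.2⟩ i hil) rfl)
            (q := takePath ⟨v, w, b :: l, h⟩ (i+1) hic) hbv.1 rfl rfl).symm
      rw [hdrop, htake, hget, map_mul, ← mul_assoc]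
    · have h0 : (0:ℕ) < (⟨v, w, b :: l, h⟩ : PathIn s t).arrows.length := by simp
      have hdrop : dropPath (⟨v, w, b :: l, h⟩ : PathIn s t) 0 h0
          = ⟨t b, w, l, hbv.2⟩ := PathIn.ext' rfl rfl rfl
      have htake : takePath (⟨v, w, b :: l, h⟩ : PathIn s t) 0 h0
          = idPath s t (s b) := PathIn.ext' hbv.1.symm rfl rfl
      have e0 : seg F ⟨v, w, b :: l, h⟩ 0
          = F.ι (M.B ⟨t b, w, l, hbv.2⟩) * F.d (F.ι (M.B (arrPath s t b)))
            * F.ι (M.B (idPath s t (s b))) := by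
        rw [seg, dif_pos h0, hdrop, htake]
        rfl
      rw [e0, mul_assoc, del_mul_id F b]
  
theorem d_iota_B (F : Forms R M W) (q : PathIn s t) :
    F.d (F.ι (M.B q)) = ∑ i ∈ Finset.range q.arrows.length, seg F q i := by
  obtain ⟨v, w, l, h⟩ := q
  exact d_iota_B_aux F l v w h

end Aux4

section Aux5

variable {k : ℕ} {A : Type} {s t : A → Fin k}
variable {R : Type} [Ring R] [Algebra ℂ R] {M : Model s t R}
variable {W : Type} [Ring W] [Algebra ℂ W]

theorem dw_sub_S_mem [Fintype A] [DecidableEq A] (F : Forms R M W)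
    (p : PathIn s t) (hp : p.src = p.tgt) :
    F.d (F.ι (M.B p)) - ∑ b : A, F.ι (D M b (M.B p)) * F.d (F.ι (M.B (arrPath s t b)))
      ∈ K' F := by
  have hS : ∀ b : A, F.ι (D M b (M.B p)) * F.d (F.ι (M.B (arrPath s t b)))
      = ∑ i ∈ Finset.range p.arrows.length,
        (if h : p.src = p.tgt ∧ p.arrows[i]? = some b ∧
            isPath s t (t b) (p.arrows.drop (i + 1) ++ p.arrows.take i) (s b) = true
          then F.ι (M.B ⟨t b, s b, p.arrows.drop (i + 1) ++ p.arrows.take i, h.2.2⟩)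
          else 0) * F.d (F.ι (M.B (arrPath s t b))) := by
    intro b
    rw [D, Module.Basis.constr_basis, derivPath, map_sum, Finset.sum_mul]
    refine Finset.sum_congr rfl fun i hi => ?_
    rw [apply_dite F.ι, map_zero]
  rw [Finset.sum_congr rfl fun b _ => hS b, Finset.sum_comm, d_iota_B F p,
    ← Finset.sum_sub_distrib]
  refine Submodule.sum_mem _ fun i hi => ?_
  have hi' : i < p.arrows.length := Finset.mem_range.1 hi
  have hc : p.src = p.tgt ∧ p.arrows[i]? = some (p.arrows[i]'hi') ∧
      isPath s t (t (p.arrows[i]'hi'))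
        (p.arrows.drop (i + 1) ++ p.arrows.take i) (s (p.arrows[i]'hi')) = true := by
    refine ⟨hp, List.getElem?_eq_getElem hi', ?_⟩
    have hsplit := isPath_split p.is_path i hi'
    exact isPath_append hsplit.2 (hp ▸ hsplit.1)
  have hsingle : ∑ b : A,
      (if h : p.src = p.tgt ∧ p.arrows[i]? = some b ∧
          isPath s t (t b) (p.arrows.drop (i + 1) ++ p.arrows.take i) (s b) = true
        then F.ι (M.B ⟨t b, s b, p.arrows.drop (i + 1) ++ p.arrows.take i, h.2.2⟩)
        else 0) * F.d (F.ι (M.B (arrPath s t b)))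
      = F.ι (M.B ⟨t (p.arrows[i]'hi'), s (p.arrows[i]'hi'),
          p.arrows.drop (i + 1) ++ p.arrows.take i, hc.2.2⟩)
        * F.d (F.ι (M.B (arrPath s t (p.arrows[i]'hi')))) := by
    rw [Finset.sum_eq_single (p.arrows[i]'hi')]
    · rw [dif_pos hc]
    · intro b _ hb
      rw [dif_neg, zero_mul]
      rintro ⟨-, hsome, -⟩
      rw [List.getElem?_eq_getElem hi'] at hsome
      exact hb (Option.some.inj hsome).symm
    · intro habs
      exact absurd (Finset.mem_univ _) habs
  rw [hsingle]
  have hopen : F.ι (M.B ⟨t (p.arrows[i]'hi'), s (p.arrows[i]'hi'),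
      p.arrows.drop (i + 1) ++ p.arrows.take i, hc.2.2⟩)
      = F.ι (M.B (takePath p i hi')) * F.ι (M.B (dropPath p i hi')) := by
    rw [← map_mul]
    refine congrArg F.ι ?_
    rw [M.mul_of_comp (dropPath p i hi') (takePath p i hi') hp.symm]
    exact congrArg M.B (PathIn.ext' rfl rfl rfl).symm
  rw [hopen, seg, dif_pos hi', mul_assoc (F.ι (M.B (takePath p i hi')))]
  refine Submodule.subset_span
    ⟨F.ι (M.B (dropPath p i hi')) * F.d (F.ι (M.B (arrPath s t (p.arrows[i]'hi')))),
     F.ι (M.B (takePath p i hi')), ?_, F.ι_mem _, rfl⟩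
  exact F.mul_mem 0 1 _ _ (F.ι_mem _) (F.d_mem 0 _ (F.ι_mem _))

end Aux5

/-- for each necklace word `w` (represented by an oriented cycle `p` of
the double quiver `𝔔`), the assignment `θ_w(a) = −∂w/∂a*`, `θ_w(a*) = ∂w/∂a` extends to
a `V`-derivation `θ_w` of `ℂ𝔔` which is symplectic, i.e. `L_{θ_w}(ω) = 0` in
`dR²_V ℂ𝔔` for `ω = Σ_{a ∈ Q_a} da* da`; moreover `i_{θ_w}(ω) = dw`. -/
theorem theta_w_symplectic
    {k : ℕ} {A₀ : Type} [DecidableEq A₀] [Fintype A₀] (s₀ t₀ : A₀ → Fin k)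
    (R : Type) [Ring R] [Algebra ℂ R] (M : Model (ds s₀ t₀) (dt s₀ t₀) R)
    (W : Type) [Ring W] [Algebra ℂ W] (F : Forms R M W)
    (p : PathIn (ds s₀ t₀) (dt s₀ t₀)) (hp : p.src = p.tgt) :
    ∃ θ : R →ₗ[ℂ] R, IsThetaOf s₀ t₀ M (M.B p) θ ∧
      ∀ L i : W →ₗ[ℂ] W, IsLOf F θ L → IsIOf F θ i →
        Submodule.Quotient.mk (p := karoubi F) (L (omega s₀ t₀ M F)) = 0 ∧
        Submodule.Quotient.mk (p := karoubi F) (i (omega s₀ t₀ M F)) =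
          Submodule.Quotient.mk (p := karoubi F) (F.d (F.ι (M.B p))) := by
  have hθ := isThetaOf_theta s₀ t₀ M (M.B p)
  refine ⟨theta M (theta0 s₀ t₀ M (M.B p)), hθ, fun L i hL hI => ?_⟩
  -- abbreviations
  set w : R := M.B p with hw
  have hmemδ : ∀ b : A₀ ⊕ A₀,
      F.d (F.ι (M.B (arrPath (ds s₀ t₀) (dt s₀ t₀) b))) ∈ F.gr 1 :=
    fun b => F.d_mem 0 _ (F.ι_mem _)
  have hTmem : ∀ b : A₀ ⊕ A₀, F.d (F.ι (D M b w)) ∈ F.gr 1 :=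
    fun b => F.d_mem 0 _ (F.ι_mem _)
  have hK := dw_sub_S_mem F p hp
  -- the one-form S = Σ_b ι(∂_b w) d(ι b)
  set S : W := ∑ b : A₀ ⊕ A₀,
    F.ι (D M b w) * F.d (F.ι (M.B (arrPath (ds s₀ t₀) (dt s₀ t₀) b))) with hS
  constructor
  · -- L ω ∈ karoubi
    have hLω : L (omega s₀ t₀ M F) = ∑ a : A₀,
        (F.d (F.ι (D M (Sum.inl a) w))
            * F.d (F.ι (M.B (arrPath (ds s₀ t₀) (dt s₀ t₀) (Sum.inl a))))
          - F.d (F.ι (M.B (arrPath (ds s₀ t₀) (dt s₀ t₀) (Sum.inr a))))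
            * F.d (F.ι (D M (Sum.inr a) w))) := by
      rw [omega, map_sum]
      refine Finset.sum_congr rfl fun a _ => ?_
      rw [hL.1, hL.2.2, hL.2.2, (hθ.2 a).1, (hθ.2 a).2, map_neg, map_neg, mul_neg,
        ← sub_eq_add_neg]
    have h1 : L (omega s₀ t₀ M F)
        - (∑ b : A₀ ⊕ A₀, F.d (F.ι (D M b w))
            * F.d (F.ι (M.B (arrPath (ds s₀ t₀) (dt s₀ t₀) b))))
        = - ∑ a : A₀,
          (F.d (F.ι (M.B (arrPath (ds s₀ t₀) (dt s₀ t₀) (Sum.inr a))))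
              * F.d (F.ι (D M (Sum.inr a) w))
            + F.d (F.ι (D M (Sum.inr a) w))
              * F.d (F.ι (M.B (arrPath (ds s₀ t₀) (dt s₀ t₀) (Sum.inr a))))) := by
      rw [hLω, Fintype.sum_sum_type (fun b : A₀ ⊕ A₀ => F.d (F.ι (D M b w))
        * F.d (F.ι (M.B (arrPath (ds s₀ t₀) (dt s₀ t₀) b))))]
      simp only [Finset.sum_sub_distrib, Finset.sum_add_distrib]
      abel
    have h1mem : L (omega s₀ t₀ M F)
        - (∑ b : A₀ ⊕ A₀, F.d (F.ι (D M b w))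
            * F.d (F.ι (M.B (arrPath (ds s₀ t₀) (dt s₀ t₀) b)))) ∈ karoubi F := by
      rw [h1]
      exact neg_mem (Submodule.sum_mem _ fun a _ => kc11 (hmemδ _) (hTmem _))
    have hdS : F.d S = ∑ b : A₀ ⊕ A₀, F.d (F.ι (D M b w))
        * F.d (F.ι (M.B (arrPath (ds s₀ t₀) (dt s₀ t₀) b))) := by
      rw [hS, map_sum]
      refine Finset.sum_congr rfl fun b _ => ?_
      rw [d_mul_of_mem0 F (F.ι_mem _), F.d_d, mul_zero, add_zero]
    have hdSmem : F.d S ∈ karoubi F := by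
      have e : F.d (F.d (F.ι w) - S) = - F.d S := by
        rw [map_sub, F.d_d, zero_sub]
      have e2 : F.d S = - F.d (F.d (F.ι w) - S) := by rw [e, neg_neg]
      rw [e2]
      exact neg_mem (d_K'_mem_karoubi F hK)
    rw [Submodule.Quotient.mk_eq_zero]
    have : L (omega s₀ t₀ M F) = (L (omega s₀ t₀ M F)
        - (∑ b : A₀ ⊕ A₀, F.d (F.ι (D M b w))
            * F.d (F.ι (M.B (arrPath (ds s₀ t₀) (dt s₀ t₀) b)))))
        + (∑ b : A₀ ⊕ A₀, F.d (F.ι (D M b w))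
            * F.d (F.ι (M.B (arrPath (ds s₀ t₀) (dt s₀ t₀) b)))) := by abel
    rw [this]
    exact add_mem h1mem (hdS ▸ hdSmem)
  · -- i ω = d w in the Karoubi quotient
    have hiω : i (omega s₀ t₀ M F) = ∑ a : A₀,
        (F.ι (D M (Sum.inl a) w)
            * F.d (F.ι (M.B (arrPath (ds s₀ t₀) (dt s₀ t₀) (Sum.inl a))))
          + F.d (F.ι (M.B (arrPath (ds s₀ t₀) (dt s₀ t₀) (Sum.inr a))))
            * F.ι (D M (Sum.inr a) w)) := by
      rw [omega, map_sum]
      refine Finset.sum_congr rfl fun a _ => ?_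
      rw [hI.1 1 _ (hmemδ (Sum.inr a)), hI.2.2, hI.2.2, (hθ.2 a).1, (hθ.2 a).2, map_neg]
      simp only [pow_one, neg_smul, one_smul, mul_neg, neg_neg, sub_eq_add_neg]
    have h3 : i (omega s₀ t₀ M F) - S ∈ karoubi F := by
      have e3 : i (omega s₀ t₀ M F) - S = ∑ a : A₀,
          (F.d (F.ι (M.B (arrPath (ds s₀ t₀) (dt s₀ t₀) (Sum.inr a))))
              * F.ι (D M (Sum.inr a) w)
            - F.ι (D M (Sum.inr a) w)
              * F.d (F.ι (M.B (arrPath (ds s₀ t₀) (dt s₀ t₀) (Sum.inr a))))) := by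
        rw [hiω, hS, Fintype.sum_sum_type (fun b : A₀ ⊕ A₀ => F.ι (D M b w)
          * F.d (F.ι (M.B (arrPath (ds s₀ t₀) (dt s₀ t₀) b))))]
        simp only [Finset.sum_sub_distrib, Finset.sum_add_distrib]
        abel
      rw [e3]
      exact Submodule.sum_mem _ fun a _ => kc10 (hmemδ _) (F.ι_mem _)
    rw [Submodule.Quotient.eq]
    have : i (omega s₀ t₀ M F) - F.d (F.ι w)
        = (i (omega s₀ t₀ M F) - S) - (F.d (F.ι w) - S) := by abel
    rw [this]
    exact sub_mem h3 (K'_le F hK)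

end Necklace
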